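/- arXiv:1311.5499 — 2 statements merged into one kernel-verified Lean document; each statement's English description precedes it below -/
import Mathlib

section
/- Let B be a 2-(v,k,λ_2;q) design with a tactical decomposition with matrices [ρ_ij] and [κ_ij]. Then Σ_{j=1}^n ρ_{lj} κ_{rj} = λ_2 · |Ψ_r| if l ≠ r, and Σ_{j=1}^n ρ_{lj} κ_{rj} = λ_1 + λ_2 · (|Ψ_r| − 1) if l = r, where λ_1 = λ_2 [v-1 choose 1]_q / [k-1 choose 1]_q. -/
open scoped Classical

/-- The Gaussian binomial coefficient `[v choose r]_q`. -/
def gaussBinom (q v r : ℕ) : ℕ :=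
  (∏ i ∈ Finset.range r, (q ^ (v - i) - 1)) / (∏ i ∈ Finset.range r, (q ^ (i + 1) - 1))

/-- `B` is a `t-(v,k,λ;q)` design. -/
def IsQDesign (F : Type*) [Field F] [Fintype F] (v t k lam : ℕ)
    (B : Finset (Submodule F (Fin v → F))) : Prop :=
  (∀ b ∈ B, Module.finrank F ↥b = k) ∧
  ∀ W : Submodule F (Fin v → F), Module.finrank F ↥W = t →
    (B.filter fun b => W ≤ b).card = lam

/-- A tactical decomposition of a design `B` over `F`: a partition of the points (the
`1`-dimensional subspaces of `F^v`) into classes `Pc 1, …, Pc m` and of the block set `B`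
into classes `Bc 1, …, Bc n`, such that every point of `Pc i` lies in exactly `rho i j`
blocks of `Bc j` and every block of `Bc j` contains exactly `kap i j` points of `Pc i`. -/
structure TacticalDecomp (F : Type*) [Field F] [Fintype F] (v m n : ℕ)
    (B : Finset (Submodule F (Fin v → F))) where
  Pc : Fin m → Set (Submodule F (Fin v → F))
  Bc : Fin n → Finset (Submodule F (Fin v → F))
  rho : Fin m → Fin n → ℕ
  kap : Fin m → Fin n → ℕ
  Pc_nonempty : ∀ i, (Pc i).Nonempty
  Bc_nonempty : ∀ j, (Bc j).Nonempty
  Pc_sub : ∀ i, Pc i ⊆ {W : Submodule F (Fin v → F) | Module.finrank F ↥W = 1}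
  Pc_cover : ∀ W : Submodule F (Fin v → F), Module.finrank F ↥W = 1 → ∃ i, W ∈ Pc i
  Pc_disj : ∀ i i', i ≠ i' → Disjoint (Pc i) (Pc i')
  Bc_cover : ∀ b : Submodule F (Fin v → F), b ∈ B ↔ ∃ j, b ∈ Bc j
  Bc_disj : ∀ j j', j ≠ j' → Disjoint (Bc j) (Bc j')
  rho_eq : ∀ i j, ∀ P ∈ Pc i, ((Bc j).filter fun b => P ≤ b).card = rho i j
  kap_eq : ∀ i j, ∀ b ∈ Bc j, {Q | Q ∈ Pc i ∧ Q ≤ b}.ncard = kap i j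

section Helpers2
set_option linter.unusedSectionVars false

section Helpers

variable {F M : Type*} [Field F] [Fintype F] [AddCommGroup M] [Module F M]

lemma span_eq_of_mem' [FiniteDimensional F M]
    {Q : Submodule F M} (hQ : Module.finrank F Q = 1) {x : M} (hx : x ∈ Q) (hx0 : x ≠ 0) :
    Submodule.span F {x} = Q := by
  apply Submodule.eq_of_le_of_finrank_le (Submodule.span_le.2 (Set.singleton_subset_iff.2 hx))
  rw [hQ, finrank_span_singleton hx0]

lemma ncard_one_dim_le [Fintype M] [FiniteDimensional F M] (b : Submodule F M) :
    {Q : Submodule F M | Module.finrank F Q = 1 ∧ Q ≤ b}.ncard * (Fintype.card F - 1)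
      = Fintype.card F ^ (Module.finrank F b) - 1 := by
  classical
  haveI : Finite (Submodule F M) :=
    Finite.of_injective (fun s : Submodule F M => (s : Set M)) SetLike.coe_injective
  haveI : Fintype (Submodule F M) := Fintype.ofFinite _
  set q := Fintype.card F with hqdef
  set T : Finset (Submodule F M) := Finset.univ.filter
      (fun Q => Module.finrank F Q = 1 ∧ Q ≤ b) with hT
  set S : Finset M := (b : Set M).toFinset \ {0} with hS
  have key : ∀ x ∈ S, Submodule.span F {x} ∈ T := by
    intro x hx
    simp only [hS, Finset.mem_sdiff, Set.mem_toFinset, SetLike.mem_coe,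
      Finset.mem_singleton] at hx
    simp only [hT, Finset.mem_filter, Finset.mem_univ, true_and]
    exact ⟨finrank_span_singleton hx.2, Submodule.span_le.2 (Set.singleton_subset_iff.2 hx.1)⟩
  have hsum := Finset.card_eq_sum_card_fiberwise key
  have hfib : ∀ Q ∈ T, (S.filter (fun x => Submodule.span F {x} = Q)).card = q - 1 := by
    intro Q hQ
    simp only [hT, Finset.mem_filter, Finset.mem_univ, true_and] at hQ
    have heq : S.filter (fun x => Submodule.span F {x} = Q) = (Q : Set M).toFinset \ {0} := by
      ext x
      simp only [hS, Finset.mem_filter, Finset.mem_sdiff, Set.mem_toFinset, SetLike.mem_coe,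
        Finset.mem_singleton]
      constructor
      · rintro ⟨⟨hxb, hx0⟩, hsp⟩
        exact ⟨hsp ▸ Submodule.mem_span_singleton_self x, hx0⟩
      · rintro ⟨hxQ, hx0⟩
        exact ⟨⟨hQ.2 hxQ, hx0⟩, span_eq_of_mem' hQ.1 hxQ hx0⟩
    have h0 : ({0} : Finset M) ⊆ (Q : Set M).toFinset := by
      simp only [Finset.singleton_subset_iff, Set.mem_toFinset, SetLike.mem_coe]
      exact Q.zero_mem
    rw [heq, Finset.card_sdiff_of_subset h0, Finset.card_singleton, Set.toFinset_card]
    simp only [SetLike.coe_sort_coe]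
    rw [Module.card_eq_pow_finrank (K := F) (V := Q), hQ.1, pow_one]
  rw [Finset.sum_congr rfl hfib, Finset.sum_const, smul_eq_mul] at hsum
  have hScard : S.card = q ^ Module.finrank F b - 1 := by
    have h0 : ({0} : Finset M) ⊆ (b : Set M).toFinset := by
      simp only [Finset.singleton_subset_iff, Set.mem_toFinset, SetLike.mem_coe]
      exact b.zero_mem
    rw [hS, Finset.card_sdiff_of_subset h0, Finset.card_singleton, Set.toFinset_card]
    simp only [SetLike.coe_sort_coe]
    rw [Module.card_eq_pow_finrank (K := F) (V := b)]
  have hncard : {Q : Submodule F M | Module.finrank F Q = 1 ∧ Q ≤ b}.ncard = T.card := by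
    rw [← Set.ncard_coe_finset]
    congr 1
    ext Q
    simp [hT]
  rw [hncard, ← hsum, hScard]

lemma finrank_sup_eq_two [FiniteDimensional F M] {P Q : Submodule F M}
    (hP : Module.finrank F P = 1) (hQ : Module.finrank F Q = 1) (hne : P ≠ Q) :
    Module.finrank F ↥(P ⊔ Q) = 2 := by
  have h := Submodule.finrank_sup_add_finrank_inf_eq P Q
  rw [hP, hQ] at h
  have hle : Module.finrank F ↥(P ⊓ Q) ≤ 1 := by
    rw [← hP]; exact Submodule.finrank_mono inf_le_left
  interval_cases h2 : Module.finrank F ↥(P ⊓ Q)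
  · omega
  · exfalso
    have h1 : P ⊓ Q = P := Submodule.eq_of_le_of_finrank_le inf_le_left (by rw [hP, h2])
    have h3 : P ⊓ Q = Q := Submodule.eq_of_le_of_finrank_le inf_le_right (by rw [hQ, h2])
    exact hne (h1 ▸ h3)

lemma card_one_dim_le [Fintype M] [FiniteDimensional F M] [Fintype (Submodule F M)]
    (b : Submodule F M) :
    (Finset.univ.filter (fun Q : Submodule F M => Module.finrank F Q = 1 ∧ Q ≤ b)).card
      * (Fintype.card F - 1) = Fintype.card F ^ (Module.finrank F b) - 1 := by
  rw [← ncard_one_dim_le b]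
  congr 1
  rw [← Set.ncard_coe_finset]
  congr 1
  ext Q
  simp

end Helpers

lemma blocks_pair {F : Type*} [Field F] [Fintype F] {v k lam2 : ℕ}
    {B : Finset (Submodule F (Fin v → F))} (hB : IsQDesign F v 2 k lam2 B)
    {P Q : Submodule F (Fin v → F)} (hP : Module.finrank F P = 1)
    (hQ : Module.finrank F Q = 1) (hne : P ≠ Q) :
    (B.filter fun b => P ≤ b ∧ Q ≤ b).card = lam2 := by
  have h2 : Module.finrank F ↥(P ⊔ Q) = 2 := finrank_sup_eq_two hP hQ hne
  rw [← hB.2 (P ⊔ Q) h2]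
  congr 1
  ext b
  simp [sup_le_iff]
lemma replication {F : Type*} [Field F] [Fintype F] {q v k lam2 : ℕ}
    (hq : Fintype.card F = q) (hk2 : 2 ≤ k) (hkv : k ≤ v)
    {B : Finset (Submodule F (Fin v → F))} (hB : IsQDesign F v 2 k lam2 B)
    {P : Submodule F (Fin v → F)} (hP : Module.finrank F P = 1) :
    (B.filter fun b => P ≤ b).card * (q ^ (k-1) - 1) = lam2 * (q ^ (v-1) - 1) := by
  classical
  haveI : Finite (Submodule F (Fin v → F)) :=
    Finite.of_injective (fun s : Submodule F (Fin v → F) => (s : Set (Fin v → F)))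
      SetLike.coe_injective
  haveI : Fintype (Submodule F (Fin v → F)) := Fintype.ofFinite _
  have hq2 : 2 ≤ q := hq ▸ Fintype.one_lt_card
  have hpow : ∀ d : ℕ, 1 ≤ d → q * (q ^ (d-1) - 1) = q ^ d - q := by
    intro d hd
    rw [Nat.mul_sub, mul_one]
    congr 1
    rw [← pow_succ']
    congr 1
    omega
  set O : Finset (Submodule F (Fin v → F)) := Finset.univ.filter
    (fun Q => Module.finrank F Q = 1 ∧ Q ≠ P) with hO
  set BP := B.filter (fun b => P ≤ b) with hBP
  -- card of O
  have htop := card_one_dim_le (F := F) (M := Fin v → F) ⊤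
  rw [hq, finrank_top, Module.finrank_fin_fun] at htop
  have hqv : q ≤ q ^ v := by
    calc q = q ^ 1 := (pow_one q).symm
    _ ≤ q ^ v := Nat.pow_le_pow_right (by omega) (by omega)
  have hOcard : O.card * (q - 1) = q ^ v - q := by
    have hPA : P ∈ Finset.univ.filter
        (fun Q : Submodule F (Fin v → F) => Module.finrank F Q = 1 ∧ Q ≤ ⊤) := by
      simp [hP]
    have hOe : O = (Finset.univ.filter
        (fun Q : Submodule F (Fin v → F) => Module.finrank F Q = 1 ∧ Q ≤ ⊤)).erase P := by
      ext Q
      simp only [hO, Finset.mem_filter, Finset.mem_univ, true_and, Finset.mem_erase, le_top,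
        and_true]
      tauto
    rw [hOe, Finset.card_erase_of_mem hPA, Nat.sub_mul, one_mul, htop]
    omega
  have hblock : ∀ b ∈ BP, (O.filter (fun Q => Q ≤ b)).card * (q - 1) = q ^ k - q := by
    intro b hb
    rw [hBP, Finset.mem_filter] at hb
    have hbk : Module.finrank F b = k := hB.1 b hb.1
    have hTb := card_one_dim_le (F := F) (M := Fin v → F) b
    rw [hq, hbk] at hTb
    have hPb : P ∈ Finset.univ.filter
        (fun Q : Submodule F (Fin v → F) => Module.finrank F Q = 1 ∧ Q ≤ b) := by
      simp [hP, hb.2]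
    have hOe : O.filter (fun Q => Q ≤ b) = (Finset.univ.filter
        (fun Q : Submodule F (Fin v → F) => Module.finrank F Q = 1 ∧ Q ≤ b)).erase P := by
      ext Q
      simp only [hO, Finset.mem_filter, Finset.mem_univ, true_and, Finset.mem_erase]
      tauto
    have hqk : q ≤ q ^ k := by
      calc q = q ^ 1 := (pow_one q).symm
      _ ≤ q ^ k := Nat.pow_le_pow_right (by omega) (by omega)
    rw [hOe, Finset.card_erase_of_mem hPb, Nat.sub_mul, one_mul, hTb]
    omega
  have swap : ∑ Q ∈ O, (BP.filter fun b => Q ≤ b).card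
      = ∑ b ∈ BP, (O.filter fun Q => Q ≤ b).card := by
    simp only [Finset.card_filter]
    exact Finset.sum_comm
  have hL : ∀ Q ∈ O, (BP.filter fun b => Q ≤ b).card = lam2 := by
    intro Q hQ
    simp only [hO, Finset.mem_filter, Finset.mem_univ, true_and] at hQ
    rw [hBP, Finset.filter_filter]
    exact blocks_pair hB hP hQ.1 (Ne.symm hQ.2)
  have key : lam2 * (q ^ v - q) = BP.card * (q ^ k - q) := by
    calc lam2 * (q ^ v - q) = lam2 * (O.card * (q - 1)) := by rw [hOcard]
    _ = (∑ Q ∈ O, (BP.filter fun b => Q ≤ b).card) * (q - 1) := by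
        rw [Finset.sum_congr rfl hL, Finset.sum_const, smul_eq_mul]; ring
    _ = (∑ b ∈ BP, (O.filter fun Q => Q ≤ b).card) * (q - 1) := by rw [swap]
    _ = ∑ b ∈ BP, ((O.filter fun Q => Q ≤ b).card * (q - 1)) := Finset.sum_mul _ _ _
    _ = ∑ b ∈ BP, (q ^ k - q) := Finset.sum_congr rfl hblock
    _ = BP.card * (q ^ k - q) := by rw [Finset.sum_const, smul_eq_mul]
  apply Nat.eq_of_mul_eq_mul_left (show 0 < q by omega)
  rw [show q * (BP.card * (q ^ (k-1) - 1)) = BP.card * (q * (q ^ (k-1) - 1)) by ring,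
    show q * (lam2 * (q ^ (v-1) - 1)) = lam2 * (q * (q ^ (v-1) - 1)) by ring,
    hpow k (by omega), hpow v (by omega)]
  exact key.symm
lemma gaussBinom_one (q d : ℕ) : gaussBinom q d 1 = (q ^ d - 1) / (q - 1) := by
  simp [gaussBinom, Finset.prod_range_one]

end Helpers2

/-- For a tactical decomposition of a `2-(v,k,λ₂;q)` design,
`Σ_j ρ_{lj} κ_{rj} = λ₂·|Ψ_r|` if `l ≠ r`, and
`Σ_j ρ_{lj} κ_{lj} = λ₁ + λ₂·(|Ψ_l| − 1)` where
`λ₁ = λ₂ [v-1 choose 1]_q / [k-1 choose 1]_q`. -/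
theorem tacticalDecomp_second_equations (F : Type*) [Field F] [Fintype F]
    (q v k lam2 m n : ℕ) (hq : Fintype.card F = q) (hk2 : 2 ≤ k) (hkv : k ≤ v)
    (B : Finset (Submodule F (Fin v → F))) (hB : IsQDesign F v 2 k lam2 B)
    (T : TacticalDecomp F v m n B) (l r : Fin m) :
    (l ≠ r → ∑ j, T.rho l j * T.kap r j = lam2 * (T.Pc r).ncard) ∧
    (∑ j, T.rho l j * T.kap l j =
      lam2 * gaussBinom q (v - 1) 1 / gaussBinom q (k - 1) 1 +
        lam2 * ((T.Pc l).ncard - 1)) := by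
  classical
  haveI : Finite (Submodule F (Fin v → F)) :=
    Finite.of_injective (fun s : Submodule F (Fin v → F) => (s : Set (Fin v → F)))
      SetLike.coe_injective
  haveI : Fintype (Submodule F (Fin v → F)) := Fintype.ofFinite _
  have hq2 : 2 ≤ q := hq ▸ Fintype.one_lt_card
  have hBU : B = Finset.univ.biUnion T.Bc := by
    ext b
    simp [T.Bc_cover b]
  -- the main double count
  have main : ∀ (r' : Fin m) (P : Submodule F (Fin v → F)), P ∈ T.Pc l →
      ∑ j, T.rho l j * T.kap r' j =
        ∑ Q ∈ (T.Pc r').toFinset, (B.filter fun b => P ≤ b ∧ Q ≤ b).card := by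
    intro r' P hPl
    have step1 : ∀ j, T.rho l j * T.kap r' j =
        ∑ b ∈ (T.Bc j).filter (fun b => P ≤ b), ((T.Pc r').toFinset.filter
          (fun Q => Q ≤ b)).card := by
      intro j
      have hcongr : ∀ b ∈ (T.Bc j).filter (fun b => P ≤ b),
          ((T.Pc r').toFinset.filter (fun Q => Q ≤ b)).card = T.kap r' j := by
        intro b hb
        rw [Finset.mem_filter] at hb
        rw [← T.kap_eq r' j b hb.1, ← Set.ncard_coe_finset]
        congr 1
        ext Q
        simp [Set.mem_toFinset]
      rw [Finset.sum_congr rfl hcongr, Finset.sum_const, smul_eq_mul,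
        T.rho_eq l j P hPl]
    rw [Finset.sum_congr rfl (fun j _ => step1 j)]
    have hdisj : ∀ j ∈ (Finset.univ : Finset (Fin n)), ∀ j' ∈ (Finset.univ : Finset (Fin n)),
        j ≠ j' → Disjoint ((T.Bc j).filter (fun b => P ≤ b))
          ((T.Bc j').filter (fun b => P ≤ b)) := by
      intro j _ j' _ hjj'
      exact Finset.disjoint_filter_filter (T.Bc_disj j j' hjj')
    rw [← Finset.sum_biUnion hdisj]
    have hfb : Finset.univ.biUnion (fun j => (T.Bc j).filter (fun b => P ≤ b))
        = B.filter (fun b => P ≤ b) := by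
      ext b
      simp only [Finset.mem_biUnion, Finset.mem_filter, Finset.mem_univ, true_and]
      constructor
      · rintro ⟨j, hbj, hpb⟩
        exact ⟨(T.Bc_cover b).2 ⟨j, hbj⟩, hpb⟩
      · rintro ⟨hbB, hpb⟩
        obtain ⟨j, hj⟩ := (T.Bc_cover b).1 hbB
        exact ⟨j, hj, hpb⟩
    rw [hfb]
    have swap : ∑ b ∈ B.filter (fun b => P ≤ b), ((T.Pc r').toFinset.filter
          (fun Q => Q ≤ b)).card
        = ∑ Q ∈ (T.Pc r').toFinset, ((B.filter (fun b => P ≤ b)).filter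
          (fun b => Q ≤ b)).card := by
      simp only [Finset.card_filter]
      exact Finset.sum_comm
    rw [swap]
    apply Finset.sum_congr rfl
    intro Q _
    rw [Finset.filter_filter]
  have hrank := T.Pc_sub
  constructor
  · -- l ≠ r
    intro hlr
    obtain ⟨P, hPl⟩ := T.Pc_nonempty l
    have hP1 : Module.finrank F ↥P = 1 := hrank l hPl
    rw [main r P hPl]
    have hconst : ∀ Q ∈ (T.Pc r).toFinset, (B.filter fun b => P ≤ b ∧ Q ≤ b).card = lam2 := by
      intro Q hQ
      rw [Set.mem_toFinset] at hQ
      have hQ1 : Module.finrank F ↥Q = 1 := hrank r hQ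
      have hne : P ≠ Q := by
        rintro rfl
        exact (Set.disjoint_left.1 (T.Pc_disj l r hlr)) hPl hQ
      exact blocks_pair hB hP1 hQ1 hne
    rw [Finset.sum_congr rfl hconst, Finset.sum_const, smul_eq_mul,
      Set.ncard_eq_toFinset_card' (T.Pc r), mul_comm]
  · -- l = l case
    obtain ⟨P, hPl⟩ := T.Pc_nonempty l
    have hP1 : Module.finrank F ↥P = 1 := hrank l hPl
    rw [main l P hPl]
    have hPmem : P ∈ (T.Pc l).toFinset := Set.mem_toFinset.2 hPl
    rw [← Finset.sum_erase_add _ _ hPmem]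
    have hconst : ∀ Q ∈ (T.Pc l).toFinset.erase P,
        (B.filter fun b => P ≤ b ∧ Q ≤ b).card = lam2 := by
      intro Q hQ
      rw [Finset.mem_erase, Set.mem_toFinset] at hQ
      exact blocks_pair hB hP1 (hrank l hQ.2) (Ne.symm hQ.1)
    rw [Finset.sum_congr rfl hconst, Finset.sum_const, smul_eq_mul,
      Finset.card_erase_of_mem hPmem]
    have hlam1 : (B.filter fun b => P ≤ b ∧ P ≤ b).card = (B.filter fun b => P ≤ b).card := by
      congr 1
      ext b
      simp
    rw [hlam1]
    -- replication identity
    have hrep := replication hq hk2 hkv hB hP1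
    set lam1 := (B.filter fun b => P ≤ b).card with hlam1def
    have hdvdk : (q - 1) ∣ (q ^ (k-1) - 1) := by
      simpa using Nat.sub_dvd_pow_sub_pow q 1 (k-1)
    have hdvdv : (q - 1) ∣ (q ^ (v-1) - 1) := by
      simpa using Nat.sub_dvd_pow_sub_pow q 1 (v-1)
    have hGk : 0 < gaussBinom q (k-1) 1 := by
      rw [gaussBinom_one]
      apply Nat.div_pos _ (by omega)
      have : q ≤ q ^ (k-1) := by
        calc q = q ^ 1 := (pow_one q).symm
        _ ≤ q ^ (k-1) := Nat.pow_le_pow_right (by omega) (by omega)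
      omega
    have hkey : lam2 * gaussBinom q (v-1) 1 = lam1 * gaussBinom q (k-1) 1 := by
      rw [gaussBinom_one, gaussBinom_one, ← Nat.mul_div_assoc lam2 hdvdv,
        ← Nat.mul_div_assoc lam1 hdvdk, ← hrep]
    rw [hkey, Nat.mul_div_cancel _ hGk, Set.ncard_eq_toFinset_card' (T.Pc l)]
    ring
end

section
/- Let B be a 2-(v,k,λ_2;2) design with a G-induced tactical decomposition, matrices [ρ_ij], [κ_ij], point orbits Ψ_1,...,Ψ_m, and let l, r, s be pairwise distinct. Then Σ_{j=1}^n ρ_{lj} κ_{rj} κ_{sj} = σ_{lrs}·λ_2 + φ, where φ is the sum over pairs (R,S) ∈ Ψ_r × Ψ_s with dim⟨P,R,S⟩ = 3 (for a fixed P ∈ Ψ_l) of the number of blocks containing ⟨P,R,S⟩, and φ ≤ (|Ψ_r|·|Ψ_s| − σ_{lrs})·min{λ_2, [v-3 choose k-3]_2}. In particular, σ_{lrs}·λ_2 ≤ Σ_{j=1}^n ρ_{lj} κ_{rj} κ_{sj} ≤ σ_{lrs}·λ_2 + (|Ψ_r|·|Ψ_s| − σ_{lrs})·min{λ_2, [v-3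 choose k-3]_2}. -/
open scoped Classical
set_option synthInstance.maxHeartbeats 1000000
set_option maxHeartbeats 2000000

/-- For `1`-dimensional subspaces `P = ⟨p⟩` and `R = ⟨r⟩` of `F_2^v` with `P ≠ R`, this is
the third point `P+R = ⟨p+r⟩` of the `2`-space `⟨P,R⟩`: the span of the sums of the
nonzero vectors of `P` and `R`. -/
def thirdPoint {v : ℕ} (P R : Submodule (ZMod 2) (Fin v → ZMod 2)) :
    Submodule (ZMod 2) (Fin v → ZMod 2) :=
  Submodule.span (ZMod 2) {x | ∃ p ∈ P, ∃ r ∈ R, p ≠ 0 ∧ r ≠ 0 ∧ x = p + r}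

lemma prod_sub_pow (N d : ℕ) (h : d ≤ N) :
    ∏ i ∈ Finset.range d, (2 ^ N - 2 ^ i) =
      (∏ i ∈ Finset.range d, 2 ^ i) * ∏ i ∈ Finset.range d, (2 ^ (N - i) - 1) := by
  rw [← Finset.prod_mul_distrib]
  refine Finset.prod_congr rfl fun i hi => ?_
  have hiN : i ≤ N := le_trans (le_of_lt (Finset.mem_range.mp hi)) h
  have : (2:ℕ) ^ i * (2 ^ (N - i) - 1) = 2 ^ i * 2 ^ (N-i) - 2^i * 1 := by
    rw [Nat.mul_sub]
  rw [this, ← pow_add, Nat.add_sub_cancel' hiN, mul_one]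

lemma prod_reflect (d : ℕ) :
    ∏ i ∈ Finset.range d, ((2:ℕ) ^ (d - i) - 1) = ∏ i ∈ Finset.range d, (2 ^ (i + 1) - 1) := by
  rw [← Finset.prod_range_reflect (fun i => (2:ℕ) ^ (i+1) - 1) d]
  refine Finset.prod_congr rfl fun i hi => ?_
  have hi' := Finset.mem_range.mp hi
  have h2 : d - 1 - i + 1 = d - i := by omega
  rw [h2]

lemma card_subspaces_le (V : Type*) [AddCommGroup V] [Module (ZMod 2) V] [Finite V] (d : ℕ) :
    Nat.card {U : Submodule (ZMod 2) V // Module.finrank (ZMod 2) ↥U = d} ≤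
      gaussBinom 2 (Module.finrank (ZMod 2) V) d := by
  set N := Module.finrank (ZMod 2) V with hN
  have hVfd : FiniteDimensional (ZMod 2) V := Module.Finite.of_finite
  by_cases hdN : d ≤ N
  · set Sig := Σ U : {U : Submodule (ZMod 2) V // Module.finrank (ZMod 2) ↥U = d},
      {s : Fin d → ↥U.1 // LinearIndependent (ZMod 2) s} with hSig
    have hq : Fintype.card (ZMod 2) = 2 := by simp
    have hfib : ∀ U : {U : Submodule (ZMod 2) V // Module.finrank (ZMod 2) ↥U = d},
        Nat.card {s : Fin d → ↥U.1 // LinearIndependent (ZMod 2) s} =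
          ∏ i ∈ Finset.range d, (2 ^ d - 2 ^ i) := by
      intro U
      have := card_linearIndependent (K := ZMod 2) (V := ↥U.1) (k := d) (by rw [U.2])
      rw [this, U.2, hq, Finset.prod_range fun i => (2:ℕ)^d - 2^i]
    haveI : Fintype {U : Submodule (ZMod 2) V // Module.finrank (ZMod 2) ↥U = d} :=
      Fintype.ofFinite _
    haveI : ∀ U : {U : Submodule (ZMod 2) V // Module.finrank (ZMod 2) ↥U = d},
        Fintype {s : Fin d → ↥U.1 // LinearIndependent (ZMod 2) s} := fun U => Fintype.ofFinite _
    have hsig : Nat.card Sig =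
        Nat.card {U : Submodule (ZMod 2) V // Module.finrank (ZMod 2) ↥U = d} *
          ∏ i ∈ Finset.range d, (2 ^ d - 2 ^ i) := by
      rw [Nat.card_eq_fintype_card, Fintype.card_sigma]
      rw [Finset.sum_congr rfl fun U _ => ((Nat.card_eq_fintype_card).symm.trans (hfib U)),
        Finset.sum_const, smul_eq_mul]
      congr 1
      exact (Nat.card_eq_fintype_card).symm
    have hinj : Nat.card Sig ≤ Nat.card {s : Fin d → V // LinearIndependent (ZMod 2) s} := by
      apply Nat.card_le_card_of_injective
        (f := fun x : Sig => (⟨fun i => (x.2.1 i : V),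
          x.2.2.map' x.1.1.subtype (Submodule.ker_subtype _)⟩ :
          {s : Fin d → V // LinearIndependent (ZMod 2) s}))
      rintro ⟨⟨U, hU⟩, ⟨s, hs⟩⟩ ⟨⟨U', hU'⟩, ⟨s', hs'⟩⟩ h
      have hcoe : (fun i => (s i : V)) = fun i => (s' i : V) := congrArg Subtype.val h
      have hspan : ∀ (W : Submodule (ZMod 2) V), Module.finrank (ZMod 2) ↥W = d →
          ∀ (t : Fin d → ↥W), LinearIndependent (ZMod 2) t →
          Submodule.span (ZMod 2) (Set.range fun i => (t i : V)) = W := by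
        intro W hW t ht
        have hb : Submodule.span (ZMod 2) (Set.range t) = ⊤ := by
          apply Submodule.eq_top_of_finrank_eq
          rw [finrank_span_eq_card ht, Fintype.card_fin, hW]
        have h0 : (fun i => (t i : V)) = W.subtype ∘ t := rfl
        rw [h0, Set.range_comp, Submodule.span_image, hb, Submodule.map_top,
          Submodule.range_subtype]
      have hUU : U = U' := by
        rw [← hspan U hU s hs, ← hspan U' hU' s' hs', hcoe]
      subst hUU
      have hss : s = s' := by
        funext i
        exact Subtype.ext (congrFun hcoe i)
      simp [hss]
    have hT : Nat.card {s : Fin d → V // LinearIndependent (ZMod 2) s} =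
        ∏ i ∈ Finset.range d, (2 ^ N - 2 ^ i) := by
      rw [card_linearIndependent (K := ZMod 2) (V := V) hdN, hq,
        Finset.prod_range fun i => (2:ℕ)^N - 2^i]
    rw [hsig, hT] at hinj
    rw [prod_sub_pow N d hdN, prod_sub_pow d d le_rfl, prod_reflect d] at hinj
    have hE : 0 < ∏ i ∈ Finset.range d, (2:ℕ) ^ i := Finset.prod_pos fun i _ => by positivity
    have hPd : 0 < ∏ i ∈ Finset.range d, ((2:ℕ) ^ (i+1) - 1) := by
      apply Finset.prod_pos
      intro i _
      have h2 : (2:ℕ)^1 ≤ 2 ^ (i+1) := Nat.pow_le_pow_right (by norm_num) (by omega)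
      simp at h2; omega
    have key : Nat.card {U : Submodule (ZMod 2) V // Module.finrank (ZMod 2) ↥U = d} *
        ∏ i ∈ Finset.range d, ((2:ℕ) ^ (i+1) - 1) ≤ ∏ i ∈ Finset.range d, (2 ^ (N-i) - 1) := by
      apply Nat.le_of_mul_le_mul_left _ hE
      calc (∏ i ∈ Finset.range d, (2:ℕ)^i) * (Nat.card _ * ∏ i ∈ Finset.range d, ((2:ℕ)^(i+1)-1))
          = Nat.card _ * ((∏ i ∈ Finset.range d, (2:ℕ)^i) * ∏ i ∈ Finset.range d, ((2:ℕ)^(i+1)-1)) := by ring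
        _ ≤ _ := hinj
    rw [gaussBinom]
    exact Nat.le_div_iff_mul_le hPd |>.mpr key
  · have : IsEmpty {U : Submodule (ZMod 2) V // Module.finrank (ZMod 2) ↥U = d} := by
      constructor
      rintro ⟨U, hU⟩
      exact hdN (hU ▸ Submodule.finrank_le U)
    simp [Nat.card_of_isEmpty]

lemma card_blocks_le {v k : ℕ} (B : Finset (Submodule (ZMod 2) (Fin v → ZMod 2)))
    (hBk : ∀ b ∈ B, Module.finrank (ZMod 2) ↥b = k)
    (W : Submodule (ZMod 2) (Fin v → ZMod 2)) (hW : Module.finrank (ZMod 2) ↥W = 3) :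
    (B.filter fun b => W ≤ b).card ≤ gaussBinom 2 (v - 3) (k - 3) := by
  classical
  have hv : Module.finrank (ZMod 2) (Fin v → ZMod 2) = v := by
    simp [Module.finrank_fintype_fun_eq_card]
  have hQ : Module.finrank (ZMod 2) ((Fin v → ZMod 2) ⧸ W) = v - 3 := by
    have h := Submodule.finrank_quotient_add_finrank W
    rw [hW, hv] at h
    omega
  have hrank : ∀ b ∈ B.filter (fun b => W ≤ b),
      Module.finrank (ZMod 2) ↥(Submodule.map W.mkQ b) = k - 3 := by
    intro b hb
    rw [Finset.mem_filter] at hb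
    obtain ⟨hbB, hWb⟩ := hb
    have h1 := LinearMap.finrank_range_add_finrank_ker (W.mkQ.comp b.subtype)
    have hrange : LinearMap.range (W.mkQ.comp b.subtype) = Submodule.map W.mkQ b := by
      rw [LinearMap.range_comp, Submodule.range_subtype]
    have hker : LinearMap.ker (W.mkQ.comp b.subtype) = Submodule.comap b.subtype W := by
      rw [LinearMap.ker_comp, Submodule.ker_mkQ]
    have hkerrank : Module.finrank (ZMod 2) ↥(Submodule.comap b.subtype W) = 3 := by
      rw [(Submodule.comapSubtypeEquivOfLe hWb).finrank_eq, hW]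
    have h3k : 3 ≤ k := by
      rw [← hW, ← hBk b hbB]
      exact Submodule.finrank_mono hWb
    rw [hrange, hker, hkerrank, hBk b hbB] at h1
    omega
  have hinj : ∀ b ∈ B.filter (fun b => W ≤ b), ∀ b' ∈ B.filter (fun b => W ≤ b),
      Submodule.map W.mkQ b = Submodule.map W.mkQ b' → b = b' := by
    intro b hb b' hb' h
    rw [Finset.mem_filter] at hb hb'
    have e1 := Submodule.comap_map_mkQ W b
    have e2 := Submodule.comap_map_mkQ W b'
    rw [sup_eq_right.mpr hb.2] at e1
    rw [sup_eq_right.mpr hb'.2] at e2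
    rw [← e1, ← e2, h]
  have hle := card_subspaces_le ((Fin v → ZMod 2) ⧸ W) (k - 3)
  rw [hQ] at hle
  refine le_trans ?_ hle
  have hcard : (B.filter fun b => W ≤ b).card =
      Nat.card {b // b ∈ B.filter (fun b => W ≤ b)} := by
    rw [Nat.card_eq_fintype_card, Fintype.card_coe]
  rw [hcard]
  apply Nat.card_le_card_of_injective
    (f := fun b : {b // b ∈ B.filter (fun b => W ≤ b)} =>
      (⟨Submodule.map W.mkQ b.1, hrank b.1 b.2⟩ :
        {U : Submodule (ZMod 2) ((Fin v → ZMod 2) ⧸ W) // Module.finrank (ZMod 2) ↥U = k - 3}))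
  rintro ⟨b, hb⟩ ⟨b', hb'⟩ h
  exact Subtype.ext (hinj b hb b' hb' (congrArg Subtype.val h))

section Geometry
variable {v : ℕ}
local notation "V" => Fin v → ZMod 2

lemma add_self_zmod2 (x : V) : x + x = 0 := by
  have h0 : (1 : ZMod 2) + 1 = 0 := by decide
  calc x + x = ((1 : ZMod 2) + 1) • x := by rw [add_smul, one_smul]
    _ = 0 := by rw [h0, zero_smul]

lemma mem_span_singleton_zmod2 {x q : V} :
    x ∈ Submodule.span (ZMod 2) {q} ↔ x = 0 ∨ x = q := by
  constructor
  · intro hx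
    obtain ⟨c, rfl⟩ := Submodule.mem_span_singleton.mp hx
    have hc' : ∀ c : ZMod 2, c = 0 ∨ c = 1 := by decide
    have hc := hc' c
    rcases hc with rfl | rfl
    · left; simp
    · right; simp
  · rintro (rfl | rfl)
    · exact Submodule.zero_mem _
    · exact Submodule.mem_span_singleton_self _

lemma onedim_span {Q : Submodule (ZMod 2) V} (hQ : Module.finrank (ZMod 2) ↥Q = 1) :
    ∃ q₀ : V, q₀ ≠ 0 ∧ Q = Submodule.span (ZMod 2) {q₀} := by
  have hne : Q ≠ ⊥ := by
    intro h
    rw [h] at hQ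
    simp [finrank_bot] at hQ
  obtain ⟨q₀, hq₀Q, hq₀⟩ := Submodule.exists_mem_ne_zero_of_ne_bot hne
  refine ⟨q₀, hq₀, ?_⟩
  have hle : Submodule.span (ZMod 2) {q₀} ≤ Q := by
    rw [Submodule.span_le, Set.singleton_subset_iff]; exact hq₀Q
  have := finrank_span_singleton (K := ZMod 2) hq₀
  exact (Submodule.eq_of_le_of_finrank_le hle (by rw [this, hQ])).symm

lemma thirdPoint_span {p r : V} (hp : p ≠ 0) (hr : r ≠ 0) :
    thirdPoint (Submodule.span (ZMod 2) {p}) (Submodule.span (ZMod 2) {r}) =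
      Submodule.span (ZMod 2) {p + r} := by
  unfold thirdPoint
  congr 1
  ext x
  constructor
  · rintro ⟨a, ha, b, hb, ha0, hb0, rfl⟩
    rcases mem_span_singleton_zmod2.mp ha with rfl | rfl
    · exact absurd rfl ha0
    rcases mem_span_singleton_zmod2.mp hb with rfl | rfl
    · exact absurd rfl hb0
    rfl
  · rintro rfl
    exact ⟨p, Submodule.mem_span_singleton_self p, r, Submodule.mem_span_singleton_self r,
      hp, hr, rfl⟩

lemma sup_two {P R : Submodule (ZMod 2) V}
    (hP : Module.finrank (ZMod 2) ↥P = 1) (hR : Module.finrank (ZMod 2) ↥R = 1)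
    (hPR : P ≠ R) : Module.finrank (ZMod 2) ↥(P ⊔ R) = 2 := by
  have hfd : FiniteDimensional (ZMod 2) V := Module.Finite.of_finite
  have h := Submodule.finrank_sup_add_finrank_inf_eq P R
  rw [hP, hR] at h
  have hinf : Module.finrank (ZMod 2) ↥(P ⊓ R) = 0 := by
    by_contra h0
    have hle : P ⊓ R ≤ P := inf_le_left
    have h1 : Module.finrank (ZMod 2) ↥(P ⊓ R) ≤ 1 := hP ▸ Submodule.finrank_mono hle
    have h2 : Module.finrank (ZMod 2) ↥(P ⊓ R) = 1 := by omega
    have hPinf : P ⊓ R = P := Submodule.eq_of_le_of_finrank_le hle (by rw [h2, hP])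
    have hPR' : P ≤ R := hPinf ▸ inf_le_right
    exact hPR (Submodule.eq_of_le_of_finrank_le hPR' (by rw [hP, hR]))
  omega

lemma dim_classify (P R S : Submodule (ZMod 2) V)
    (hP : Module.finrank (ZMod 2) ↥P = 1) (hR : Module.finrank (ZMod 2) ↥R = 1)
    (hS : Module.finrank (ZMod 2) ↥S = 1)
    (hPR : P ≠ R) (hPS : P ≠ S) (hRS : R ≠ S) :
    (S = thirdPoint P R ∧ Module.finrank (ZMod 2) ↥(P ⊔ R ⊔ S) = 2 ∧ S ≤ P ⊔ R) ∨
      (S ≠ thirdPoint P R ∧ Module.finrank (ZMod 2) ↥(P ⊔ R ⊔ S) = 3) := by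
  have hfd : FiniteDimensional (ZMod 2) V := Module.Finite.of_finite
  obtain ⟨p, hp0, rfl⟩ := onedim_span hP
  obtain ⟨r, hr0, rfl⟩ := onedim_span hR
  obtain ⟨s, hs0, rfl⟩ := onedim_span hS
  have h3 := thirdPoint_span hp0 hr0
  have h2 : Module.finrank (ZMod 2)
      ↥(Submodule.span (ZMod 2) {p} ⊔ Submodule.span (ZMod 2) {r}) = 2 := sup_two hP hR hPR
  by_cases hsle : Submodule.span (ZMod 2) {s} ≤
      Submodule.span (ZMod 2) {p} ⊔ Submodule.span (ZMod 2) {r}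
  · left
    have hseq : s = p + r := by
      have hs : s ∈ Submodule.span (ZMod 2) {p} ⊔ Submodule.span (ZMod 2) {r} :=
        hsle (Submodule.mem_span_singleton_self s)
      obtain ⟨a, ha, b, hb, hab⟩ := Submodule.mem_sup.mp hs
      rcases mem_span_singleton_zmod2.mp ha with rfl | rfl <;>
        rcases mem_span_singleton_zmod2.mp hb with rfl | rfl
      · exfalso; apply hs0; rw [← hab]; simp
      · exfalso; apply hRS; rw [zero_add] at hab; rw [hab]
      · exfalso; apply hPS; rw [add_zero] at hab; rw [hab]
      · exact hab.symm
    refine ⟨by rw [h3, hseq], ?_, hsle⟩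
    rw [sup_eq_left.mpr hsle, h2]
  · right
    constructor
    · intro h
      apply hsle
      rw [h, h3, Submodule.span_le, Set.singleton_subset_iff]
      exact Submodule.add_mem_sup (Submodule.mem_span_singleton_self p)
        (Submodule.mem_span_singleton_self r)
    · have h := Submodule.finrank_sup_add_finrank_inf_eq
        (Submodule.span (ZMod 2) {p} ⊔ Submodule.span (ZMod 2) {r}) (Submodule.span (ZMod 2) {s})
      rw [h2, hS] at h
      have hinf : Module.finrank (ZMod 2)
          ↥((Submodule.span (ZMod 2) {p} ⊔ Submodule.span (ZMod 2) {r}) ⊓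
            Submodule.span (ZMod 2) {s}) = 0 := by
        by_contra h0
        have hle : (Submodule.span (ZMod 2) {p} ⊔ Submodule.span (ZMod 2) {r}) ⊓
            Submodule.span (ZMod 2) {s} ≤ Submodule.span (ZMod 2) {s} := inf_le_right
        have h1 := Submodule.finrank_mono hle
        rw [hS] at h1
        have heq := Submodule.eq_of_le_of_finrank_le hle (by omega)
        exact hsle (heq ▸ inf_le_left)
      omega
end Geometry


/-- Theorem 5, case `l ≠ r ≠ s ≠ l`: for a `G`-induced tactical decomposition of a
`2-(v,k,λ₂;2)` design with pairwise distinct indices `l, r, s` and a fixed `P ∈ Ψ_l`,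
`Σ_j ρ_{lj} κ_{rj} κ_{sj} = σ_{lrs}·λ₂ + φ` where `φ` is the sum over pairs
`(R,S) ∈ Ψ_r × Ψ_s` with `dim⟨P,R,S⟩ = 3` of the number of blocks containing `⟨P,R,S⟩`,
and `φ ≤ (|Ψ_r|·|Ψ_s| − σ_{lrs})·min{λ₂, [v-3 choose k-3]_2}`; in particular the stated
lower and upper bounds on `Σ_j ρ_{lj} κ_{rj} κ_{sj}` hold. -/
theorem tacticalDecomp_triple_sum_distinct (v k lam2 m n : ℕ)
    (B : Finset (Submodule (ZMod 2) (Fin v → ZMod 2)))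
    (hB : IsQDesign (ZMod 2) v 2 k lam2 B)
    (T : TacticalDecomp (ZMod 2) v m n B)
    (G : Subgroup ((Fin v → ZMod 2) ≃ₗ[ZMod 2] (Fin v → ZMod 2)))
    (hGB : ∀ g ∈ G, B.image (fun b => Submodule.map g.toLinearMap b) = B)
    (hGPc : ∀ i, ∀ X ∈ T.Pc i,
      T.Pc i = {Y | ∃ g ∈ G, Submodule.map g.toLinearMap X = Y})
    (hGBc : ∀ j, ∀ b ∈ T.Bc j,
      (T.Bc j : Set (Submodule (ZMod 2) (Fin v → ZMod 2))) =
        {c | ∃ g ∈ G, Submodule.map g.toLinearMap b = c})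
    (l r s : Fin m) (hlr : l ≠ r) (hls : l ≠ s) (hrs : r ≠ s)
    (P : Submodule (ZMod 2) (Fin v → ZMod 2)) (hP : P ∈ T.Pc l) :
    let σ := {R | R ∈ T.Pc r ∧ R ≠ P ∧ thirdPoint P R ∈ T.Pc s}.ncard
    let φ := ∑ᶠ R ∈ T.Pc r, ∑ᶠ S ∈ T.Pc s,
      if Module.finrank (ZMod 2) ↥(P ⊔ R ⊔ S) = 3 then
        (B.filter fun b => P ≤ b ∧ R ≤ b ∧ S ≤ b).card else 0
    (∑ j, T.rho l j * T.kap r j * T.kap s j) = σ * lam2 + φ ∧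
    φ ≤ ((T.Pc r).ncard * (T.Pc s).ncard - σ) * min lam2 (gaussBinom 2 (v - 3) (k - 3)) ∧
    σ * lam2 ≤ (∑ j, T.rho l j * T.kap r j * T.kap s j) ∧
    (∑ j, T.rho l j * T.kap r j * T.kap s j) ≤
      σ * lam2 +
        ((T.Pc r).ncard * (T.Pc s).ncard - σ) *
          min lam2 (gaussBinom 2 (v - 3) (k - 3)) := by
  intro σ φ
  classical
  have hfr : (T.Pc r).Finite := Set.toFinite _
  have hfs : (T.Pc s).Finite := Set.toFinite _
  set Fr := hfr.toFinset with hFr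
  set Fs := hfs.toFinset with hFs
  set M := min lam2 (gaussBinom 2 (v - 3) (k - 3)) with hM
  set Nb := fun (R S : Submodule (ZMod 2) (Fin v → ZMod 2)) =>
    (B.filter fun b => P ≤ b ∧ R ≤ b ∧ S ≤ b).card with hNb
  have hP1 : Module.finrank (ZMod 2) ↥P = 1 := T.Pc_sub l hP
  -- distinctness helpers
  have hPnotr : P ∉ T.Pc r := fun h => Set.disjoint_left.mp (T.Pc_disj l r hlr) hP h
  have hPnots : P ∉ T.Pc s := fun h => Set.disjoint_left.mp (T.Pc_disj l s hls) hP h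
  have hRnP : ∀ R ∈ T.Pc r, R ≠ P := fun R hR h => hPnotr (h ▸ hR)
  have hSnP : ∀ S ∈ T.Pc s, S ≠ P := fun S hS h => hPnots (h ▸ hS)
  have hRnS : ∀ R ∈ T.Pc r, ∀ S ∈ T.Pc s, R ≠ S := fun R hR S hS h =>
    Set.disjoint_left.mp (T.Pc_disj r s hrs) hR (h ▸ hS)
  -- classification
  have hcase : ∀ R ∈ Fr, ∀ S ∈ Fs,
      (S = thirdPoint P R ∧ Module.finrank (ZMod 2) ↥(P ⊔ R ⊔ S) = 2 ∧ S ≤ P ⊔ R) ∨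
      (S ≠ thirdPoint P R ∧ Module.finrank (ZMod 2) ↥(P ⊔ R ⊔ S) = 3) := by
    intro R hR S hS
    have hRm : R ∈ T.Pc r := hfr.mem_toFinset.mp hR
    have hSm : S ∈ T.Pc s := hfs.mem_toFinset.mp hS
    exact dim_classify P R S hP1 (T.Pc_sub r hRm) (T.Pc_sub s hSm)
      (fun h => hRnP R hRm h.symm) (fun h => hSnP S hSm h.symm) (hRnS R hRm S hSm)
  -- Step 1: sum over blocks through P
  have step1 : (∑ j, T.rho l j * T.kap r j * T.kap s j) =
      ∑ b ∈ B.filter (fun b => P ≤ b),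
        (Fr.filter (· ≤ b)).card * (Fs.filter (· ≤ b)).card := by
    have hBfil : B.filter (fun b => P ≤ b) =
        Finset.univ.biUnion (fun j => (T.Bc j).filter (fun b => P ≤ b)) := by
      ext b
      simp only [Finset.mem_filter, Finset.mem_biUnion, Finset.mem_univ, true_and]
      constructor
      · rintro ⟨hbB, hPb⟩
        obtain ⟨j, hj⟩ := (T.Bc_cover b).mp hbB
        exact ⟨j, hj, hPb⟩
      · rintro ⟨j, hj, hPb⟩
        exact ⟨(T.Bc_cover b).mpr ⟨j, hj⟩, hPb⟩
    have hdisjBc : ∀ j ∈ (Finset.univ : Finset (Fin n)), ∀ j' ∈ Finset.univ, j ≠ j' →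
        Disjoint ((T.Bc j).filter (fun b => P ≤ b)) ((T.Bc j').filter (fun b => P ≤ b)) :=
      fun j _ j' _ hjj' => Finset.disjoint_filter_filter (T.Bc_disj j j' hjj')
    rw [hBfil, Finset.sum_biUnion hdisjBc]
    refine Finset.sum_congr rfl fun j _ => ?_
    have hkr : ∀ b ∈ T.Bc j, (Fr.filter (· ≤ b)).card = T.kap r j := by
      intro b hb
      rw [← T.kap_eq r j b hb, ← Set.ncard_coe_finset]
      congr 1
      ext Q
      simp only [Finset.coe_filter, hFr, Set.Finite.mem_toFinset, Set.mem_setOf_eq]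
    have hks : ∀ b ∈ T.Bc j, (Fs.filter (· ≤ b)).card = T.kap s j := by
      intro b hb
      rw [← T.kap_eq s j b hb, ← Set.ncard_coe_finset]
      congr 1
      ext Q
      simp only [Finset.coe_filter, hFs, Set.Finite.mem_toFinset, Set.mem_setOf_eq]
    rw [Finset.sum_congr rfl (fun b hb => by
      have hbB := (Finset.mem_filter.mp hb).1
      rw [hkr b hbB, hks b hbB])]
    rw [Finset.sum_const, T.rho_eq l j P hP, smul_eq_mul, mul_assoc]
  -- Step 2: expand and swap
  have step2 : (∑ b ∈ B.filter (fun b => P ≤ b),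
      (Fr.filter (· ≤ b)).card * (Fs.filter (· ≤ b)).card) =
      ∑ R ∈ Fr, ∑ S ∈ Fs, Nb R S := by
    have hexp : ∀ b, (Fr.filter (· ≤ b)).card * (Fs.filter (· ≤ b)).card =
        ∑ R ∈ Fr, ∑ S ∈ Fs, (if R ≤ b ∧ S ≤ b then 1 else 0) := by
      intro b
      rw [Finset.card_filter, Finset.card_filter, Finset.sum_mul_sum]
      exact Finset.sum_congr rfl fun R _ => Finset.sum_congr rfl fun S _ => by
        by_cases h1 : R ≤ b <;> by_cases h2 : S ≤ b <;> simp [h1, h2]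
    rw [Finset.sum_congr rfl fun b _ => hexp b]
    rw [Finset.sum_comm]
    refine Finset.sum_congr rfl fun R _ => ?_
    rw [Finset.sum_comm]
    refine Finset.sum_congr rfl fun S _ => ?_
    rw [hNb, ← Finset.card_filter, Finset.filter_filter]
  -- dim-2 value
  have hdim2val : ∀ R ∈ Fr, ∀ S, S ≤ P ⊔ R → Nb R S = lam2 := by
    intro R hR S hSle
    have hRm : R ∈ T.Pc r := hfr.mem_toFinset.mp hR
    have hfil : (B.filter fun b => P ≤ b ∧ R ≤ b ∧ S ≤ b) =
        B.filter (fun b => P ⊔ R ≤ b) := by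
      apply Finset.filter_congr
      intro b _
      constructor
      · rintro ⟨h1, h2, _⟩
        exact sup_le h1 h2
      · intro h
        exact ⟨le_trans le_sup_left h, le_trans le_sup_right h, le_trans hSle h⟩
    rw [hNb]
    simp only []
    rw [hfil]
    exact hB.2 (P ⊔ R) (sup_two hP1 (T.Pc_sub r hRm) (fun h => hRnP R hRm h.symm))
  -- inner-sum collapse
  have hinner : ∀ R ∈ Fr, ∀ c : Submodule (ZMod 2) (Fin v → ZMod 2) → ℕ,
      (∑ S ∈ Fs, if Module.finrank (ZMod 2) ↥(P ⊔ R ⊔ S) = 3 then 0 else c S) =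
      (if thirdPoint P R ∈ T.Pc s then c (thirdPoint P R) else 0) := by
    intro R hR c
    by_cases ht : thirdPoint P R ∈ T.Pc s
    · have htFs : thirdPoint P R ∈ Fs := hfs.mem_toFinset.mpr ht
      rw [Finset.sum_eq_single_of_mem _ htFs ?_, if_pos ht]
      · rcases hcase R hR (thirdPoint P R) htFs with ⟨_, h2, _⟩ | ⟨hne, _⟩
        · rw [if_neg (by rw [h2]; omega)]
        · exact absurd rfl hne
      · intro S hS hne
        rcases hcase R hR S hS with ⟨heq, _, _⟩ | ⟨_, h3⟩
        · exact absurd heq hne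
        · rw [if_pos h3]
    · rw [if_neg ht]
      apply Finset.sum_eq_zero
      intro S hS
      have hSne : S ≠ thirdPoint P R := fun h => ht (h ▸ (hfs.mem_toFinset.mp hS))
      rcases hcase R hR S hS with ⟨heq, _, _⟩ | ⟨_, h3⟩
      · exact absurd heq hSne
      · rw [if_pos h3]
  -- sigma as a finset card
  have hσ : σ = (Fr.filter fun R => thirdPoint P R ∈ T.Pc s).card := by
    show ({R | R ∈ T.Pc r ∧ R ≠ P ∧ thirdPoint P R ∈ T.Pc s}).ncard = _
    rw [← Set.ncard_coe_finset]
    congr 1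
    ext R
    simp only [Finset.coe_filter, Set.mem_setOf_eq, hFr, Set.Finite.mem_toFinset]
    constructor
    · rintro ⟨h1, _, h3⟩; exact ⟨h1, h3⟩
    · rintro ⟨h1, h3⟩; exact ⟨h1, hRnP R h1, h3⟩
  -- split Nb
  have hsplit : ∀ R ∈ Fr, ∀ S ∈ Fs, Nb R S =
      (if Module.finrank (ZMod 2) ↥(P ⊔ R ⊔ S) = 3 then Nb R S else 0) +
      (if Module.finrank (ZMod 2) ↥(P ⊔ R ⊔ S) = 3 then 0 else Nb R S) := by
    intro R _ S _
    by_cases h : Module.finrank (ZMod 2) ↥(P ⊔ R ⊔ S) = 3 <;> simp [h]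
  -- the sigma part
  have hsigpart : (∑ R ∈ Fr, ∑ S ∈ Fs,
      if Module.finrank (ZMod 2) ↥(P ⊔ R ⊔ S) = 3 then 0 else Nb R S) = σ * lam2 := by
    rw [Finset.sum_congr rfl fun R hR => hinner R hR (Nb R)]
    have : ∀ R ∈ Fr, (if thirdPoint P R ∈ T.Pc s then Nb R (thirdPoint P R) else 0) =
        (if thirdPoint P R ∈ T.Pc s then lam2 else 0) := by
      intro R hR
      by_cases ht : thirdPoint P R ∈ T.Pc s
      · rw [if_pos ht, if_pos ht]
        have htFs : thirdPoint P R ∈ Fs := hfs.mem_toFinset.mpr ht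
        rcases hcase R hR (thirdPoint P R) htFs with ⟨_, _, hle⟩ | ⟨hne, _⟩
        · exact hdim2val R hR _ hle
        · exact absurd rfl hne
      · rw [if_neg ht, if_neg ht]
    rw [Finset.sum_congr rfl this, Finset.sum_ite, Finset.sum_const, Finset.sum_const_zero,
      add_zero, smul_eq_mul, hσ]
  -- phi as finset sums
  have hφ : φ = ∑ R ∈ Fr, ∑ S ∈ Fs,
      (if Module.finrank (ZMod 2) ↥(P ⊔ R ⊔ S) = 3 then Nb R S else 0) := by
    show (∑ᶠ R ∈ T.Pc r, ∑ᶠ S ∈ T.Pc s, _) = _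
    rw [show T.Pc r = ↑Fr from (hfr.coe_toFinset).symm, finsum_mem_coe_finset]
    refine Finset.sum_congr rfl fun R _ => ?_
    rw [show T.Pc s = ↑Fs from (hfs.coe_toFinset).symm, finsum_mem_coe_finset]
  -- main identity
  have main_eq : (∑ j, T.rho l j * T.kap r j * T.kap s j) = σ * lam2 + φ := by
    rw [step1, step2, hφ, ← hsigpart]
    rw [Finset.sum_congr rfl fun R hR => Finset.sum_congr rfl fun S hS => hsplit R hR S hS]
    rw [Finset.sum_congr rfl fun R _ => Finset.sum_add_distrib, Finset.sum_add_distrib,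
      add_comm]
  -- counting dim-3 pairs
  have hcount : (∑ R ∈ Fr, ∑ S ∈ Fs,
      if Module.finrank (ZMod 2) ↥(P ⊔ R ⊔ S) = 3 then 1 else 0) + σ =
      Fr.card * Fs.card := by
    have h1 : (∑ R ∈ Fr, ∑ S ∈ Fs,
        if Module.finrank (ZMod 2) ↥(P ⊔ R ⊔ S) = 3 then 0 else 1) = σ := by
      rw [Finset.sum_congr rfl fun R hR => hinner R hR (fun _ => 1)]
      rw [Finset.sum_ite, Finset.sum_const, Finset.sum_const_zero, add_zero, smul_eq_mul,
        mul_one, hσ]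
    rw [← h1, ← Finset.sum_add_distrib]
    have h2 : ∀ R ∈ Fr, ((∑ S ∈ Fs,
        if Module.finrank (ZMod 2) ↥(P ⊔ R ⊔ S) = 3 then 1 else 0) +
        ∑ S ∈ Fs, if Module.finrank (ZMod 2) ↥(P ⊔ R ⊔ S) = 3 then 0 else 1) = Fs.card := by
      intro R _
      rw [← Finset.sum_add_distrib]
      have : ∀ S ∈ Fs, ((if Module.finrank (ZMod 2) ↥(P ⊔ R ⊔ S) = 3 then 1 else 0) +
          if Module.finrank (ZMod 2) ↥(P ⊔ R ⊔ S) = 3 then 0 else 1) = 1 := by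
        intro S _
        by_cases h : Module.finrank (ZMod 2) ↥(P ⊔ R ⊔ S) = 3 <;> simp [h]
      rw [Finset.sum_congr rfl this, Finset.sum_const, smul_eq_mul, mul_one]
    rw [Finset.sum_congr rfl h2, Finset.sum_const, smul_eq_mul]
  -- per-term bound in dim-3 case
  have hbound : ∀ R ∈ Fr, ∀ S ∈ Fs,
      (if Module.finrank (ZMod 2) ↥(P ⊔ R ⊔ S) = 3 then Nb R S else 0) ≤
      (if Module.finrank (ZMod 2) ↥(P ⊔ R ⊔ S) = 3 then M else 0) := by
    intro R hR S hS
    by_cases h3 : Module.finrank (ZMod 2) ↥(P ⊔ R ⊔ S) = 3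
    · rw [if_pos h3, if_pos h3, hM]
      have hRm : R ∈ T.Pc r := hfr.mem_toFinset.mp hR
      apply le_min
      · -- ≤ lam2
        have hsub : (B.filter fun b => P ≤ b ∧ R ≤ b ∧ S ≤ b) ⊆
            B.filter (fun b => P ⊔ R ≤ b) := by
          apply Finset.monotone_filter_right
          intro b _ hb
          exact sup_le hb.1 hb.2.1
        calc Nb R S ≤ (B.filter (fun b => P ⊔ R ≤ b)).card := Finset.card_le_card hsub
          _ = lam2 := hB.2 (P ⊔ R)
              (sup_two hP1 (T.Pc_sub r hRm) (fun h => hRnP R hRm h.symm))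
      · -- ≤ gauss
        have hsub : (B.filter fun b => P ≤ b ∧ R ≤ b ∧ S ≤ b) ⊆
            B.filter (fun b => P ⊔ R ⊔ S ≤ b) := by
          apply Finset.monotone_filter_right
          intro b _ hb
          exact sup_le (sup_le hb.1 hb.2.1) hb.2.2
        calc Nb R S ≤ (B.filter (fun b => P ⊔ R ⊔ S ≤ b)).card := Finset.card_le_card hsub
          _ ≤ gaussBinom 2 (v - 3) (k - 3) := card_blocks_le B hB.1 (P ⊔ R ⊔ S) h3
    · rw [if_neg h3, if_neg h3]
  -- bound on phi
  have hncr : (T.Pc r).ncard = Fr.card := by rw [← Set.ncard_coe_finset, hfr.coe_toFinset]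
  have hncs : (T.Pc s).ncard = Fs.card := by rw [← Set.ncard_coe_finset, hfs.coe_toFinset]
  have hφle : φ ≤ ((T.Pc r).ncard * (T.Pc s).ncard - σ) * M := by
    rw [hφ, hncr, hncs]
    calc (∑ R ∈ Fr, ∑ S ∈ Fs,
        if Module.finrank (ZMod 2) ↥(P ⊔ R ⊔ S) = 3 then Nb R S else 0)
        ≤ ∑ R ∈ Fr, ∑ S ∈ Fs,
          (if Module.finrank (ZMod 2) ↥(P ⊔ R ⊔ S) = 3 then M else 0) :=
          Finset.sum_le_sum fun R hR => Finset.sum_le_sum fun S hS => hbound R hR S hS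
      _ = (∑ R ∈ Fr, ∑ S ∈ Fs,
          (if Module.finrank (ZMod 2) ↥(P ⊔ R ⊔ S) = 3 then 1 else 0)) * M := by
          rw [Finset.sum_mul]
          refine Finset.sum_congr rfl fun R _ => ?_
          rw [Finset.sum_mul]
          refine Finset.sum_congr rfl fun S _ => ?_
          by_cases h : Module.finrank (ZMod 2) ↥(P ⊔ R ⊔ S) = 3 <;> simp [h]
      _ = (Fr.card * Fs.card - σ) * M := by
          congr 1
          omega
  refine ⟨main_eq, hφle, ?_, ?_⟩
  · rw [main_eq]; exact Nat.le_add_right _ _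
  · rw [main_eq]
    exact Nat.add_le_add_left hφle _
end
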